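/- Let 𝒜 be an abelian category, 𝒞 ⊆ 𝒜 full and additive, C• a bounded-above complex of objects of 𝒞, and X• an arbitrary complex. Then the canonical map Hom_{K(𝒜)}(C•, X•) → Hom_{D_𝒞(𝒜)}(C•, X•) is an isomorphism of abelian groups. -/

import Mathlib

open CategoryTheory Limits

universe v u

variable {A : Type u} [Category.{v} A] [Abelian A]

/-- A complex `X` is `𝒞`-acyclic if `Hom_𝒜(C, X)` is an acyclic complex of abelian
groups for every `C ∈ 𝒞`. -/
def CAcyclic (𝒞 : Set A) (X : CochainComplex A ℤ) : Prop :=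
  ∀ C ∈ 𝒞, ∀ i : ℤ,
    (((preadditiveCoyoneda.obj (Opposite.op C)).mapHomologicalComplex
      (ComplexShape.up ℤ)).obj X).ExactAt i

/-- A chain map `f` is a `𝒞`-quasi-isomorphism if `Hom_𝒜(C, f)` is a quasi-isomorphism
for every `C ∈ 𝒞`. -/
def CQuasiIso (𝒞 : Set A) {X Y : CochainComplex A ℤ} (f : X ⟶ Y) : Prop :=
  ∀ C ∈ 𝒞, QuasiIso (((preadditiveCoyoneda.obj (Opposite.op C)).mapHomologicalComplex
      (ComplexShape.up ℤ)).map f)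

/-- A cochain complex is bounded above. -/
def BoundedAbove (X : CochainComplex A ℤ) : Prop :=
  ∃ n : ℤ, ∀ i : ℤ, n < i → IsZero (X.X i)

/-- The class of morphisms of the homotopy category `K(𝒜)` represented by a
`𝒞`-quasi-isomorphism. Localizing at this class gives the `𝒞`-derived category
`D_𝒞(𝒜) = K(𝒜)/K_{𝒞-ac}(𝒜)`. -/
def Wc (𝒞 : Set A) : MorphismProperty (HomotopyCategory A (ComplexShape.up ℤ)) :=
  fun X Y f => ∃ f₀ : X.as ⟶ Y.as, CQuasiIso 𝒞 f₀ ∧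
    f = (HomotopyCategory.quotient A (ComplexShape.up ℤ)).map f₀

namespace Stmt8Aux

open Pretriangulated HomotopyCategory

/-- The `Hom(C, -)` functor on cochain complexes. -/
noncomputable abbrev FF (C : A) :
    CochainComplex A ℤ ⥤ CochainComplex AddCommGrpCat.{v} ℤ :=
  (preadditiveCoyoneda.obj (Opposite.op C)).mapHomologicalComplex (ComplexShape.up ℤ)

/-- The `Hom(C, -)` functor on homotopy categories. -/
noncomputable abbrev Phi (C : A) :
    HomotopyCategory A (ComplexShape.up ℤ) ⥤ HomotopyCategory AddCommGrpCat.{v} (ComplexShape.up ℤ) :=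
  (preadditiveCoyoneda.obj (Opposite.op C)).mapHomotopyCategory (ComplexShape.up ℤ)

lemma lift_of_exact (C : A) (Z : CochainComplex A ℤ) (i : ℤ)
    (h : ((FF C).obj Z).ExactAt i)
    (φ : C ⟶ Z.X i) (hφ : φ ≫ Z.d i (i+1) = 0) :
    ∃ ψ : C ⟶ Z.X (i-1), ψ ≫ Z.d (i-1) i = φ := by
  rw [HomologicalComplex.exactAt_iff' _ (i-1) i (i+1) (by simp) (by simp)] at h
  rw [ShortComplex.ab_exact_iff] at h
  exact h φ hφ

variable (Cc Z : CochainComplex A ℤ) (u : Cc ⟶ Z) (n : ℤ)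

/-- Partial homotopy data, constructed by downward recursion. -/
noncomputable def hp (hb : ∀ i : ℤ, n < i → IsZero (Cc.X i))
    (hZ : ∀ i j : ℤ, ((FF (Cc.X i)).obj Z).ExactAt j) :
    ∀ i : ℤ, {p : (Cc.X i ⟶ Z.X (i-1)) × (Cc.X (i+1) ⟶ Z.X (i+1-1)) //
      u.f i = Cc.d i (i+1) ≫ p.2 ≫ (Z.XIsoOfEq (show i+1-1 = i by ring)).hom
        + p.1 ≫ Z.d (i-1) i} := fun i =>
  if h : n < i then ⟨(0, 0), (hb i h).eq_of_src _ _⟩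
  else
    have prev := hp hb hZ (i+1)
    have hg : (u.f i - Cc.d i (i+1) ≫ prev.1.1 ≫ (Z.XIsoOfEq (show i+1-1 = i by ring)).hom) ≫
        Z.d i (i+1) = 0 := by
      have hc : u.f i ≫ Z.d i (i+1) = Cc.d i (i+1) ≫ u.f (i+1) := u.comm i (i+1)
      have h2 := prev.2
      have h2' : prev.1.1 ≫ Z.d (i+1-1) (i+1) =
          u.f (i+1) - Cc.d (i+1) (i+1+1) ≫ prev.1.2 ≫
            (Z.XIsoOfEq (show i+1+1-1 = i+1 by ring)).hom :=
        eq_sub_of_add_eq' h2.symm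
      rw [Preadditive.sub_comp, hc]
      simp only [Category.assoc, HomologicalComplex.XIsoOfEq_hom_comp_d]
      rw [h2']
      simp [Preadditive.comp_sub]
    ⟨((lift_of_exact _ Z i (hZ i i) _ hg).choose, prev.1.1), by
      rw [(lift_of_exact _ Z i (hZ i i) _ hg).choose_spec]; abel⟩
termination_by i => (n + 1 - i).toNat
decreasing_by
  exact (Int.toNat_lt_toNat (by omega)).2 (by omega)

lemma hp_snd (hb : ∀ i : ℤ, n < i → IsZero (Cc.X i))
    (hZ : ∀ i j : ℤ, ((FF (Cc.X i)).obj Z).ExactAt j) (i : ℤ) :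
    (hp Cc Z u n hb hZ i).1.2 = (hp Cc Z u n hb hZ (i+1)).1.1 := by
  by_cases h : n < i
  · rw [hp, dif_pos h]
    rw [hp, dif_pos (by omega)]
  · conv_lhs => rw [hp, dif_neg h]

/-- A chain map from a bounded above complex to a suitably acyclic complex
is null-homotopic. -/
noncomputable def homotopyToZero (hb : ∀ i : ℤ, n < i → IsZero (Cc.X i))
    (hZ : ∀ i j : ℤ, ((FF (Cc.X i)).obj Z).ExactAt j) :
    Homotopy u 0 where
  hom i j := if h : j + 1 = i then
      (hp Cc Z u n hb hZ i).1.1 ≫ (Z.XIsoOfEq (show i - 1 = j by omega)).hom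
    else 0
  zero i j hij := dif_neg (by simpa [ComplexShape.up] using hij)
  comm i := by
    have H := (hp Cc Z u n hb hZ i).2
    rw [hp_snd] at H
    have hnext : (ComplexShape.up ℤ).next i = i + 1 := CochainComplex.next ℤ i
    have hprev : (ComplexShape.up ℤ).prev i = i - 1 := CochainComplex.prev ℤ i
    rw [dNext_eq _ (show (ComplexShape.up ℤ).Rel i (i+1) from rfl),
      prevD_eq _ (show (ComplexShape.up ℤ).Rel (i-1) i by simp)]
    dsimp
    rw [if_pos (show (i-1) + 1 = i by omega)]
    simp only [HomologicalComplex.XIsoOfEq_rfl, Iso.refl_hom, Category.comp_id,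
      HomologicalComplex.zero_f, add_zero]
    exact H

variable (𝒞 : Set A)

/-- `K_{𝒞-ac}(𝒜)`, as a triangulated subcategory of `K(𝒜)`. -/
noncomputable def Sac : ObjectProperty (HomotopyCategory A (ComplexShape.up ℤ)) :=
  fun X => ∀ C ∈ 𝒞, subcategoryAcyclic AddCommGrpCat ((Phi C).obj X)

instance : (Sac 𝒞).IsClosedUnderIsomorphisms where
  of_iso e hX C hC := (subcategoryAcyclic AddCommGrpCat).prop_of_iso ((Phi C).mapIso e) (hX C hC)

open ZeroObject in
instance : (Sac 𝒞).IsTriangulated where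
  exists_zero := ⟨0, isZero_zero _, fun C _ => (mem_subcategoryAcyclic_iff _).2 (fun n =>
      (homologyFunctor AddCommGrpCat (ComplexShape.up ℤ) n).map_isZero
        ((Phi C).map_isZero (isZero_zero _)))⟩
  isStableUnderShiftBy a := ⟨fun X hX C hC => (subcategoryAcyclic AddCommGrpCat).prop_of_iso
      (((Phi C).commShiftIso a).symm.app X)
      ((subcategoryAcyclic AddCommGrpCat).le_shift a _ (hX C hC))⟩
  ext₂' T hT h₁ h₃ := ObjectProperty.le_isoClosure _ _ (fun C hC =>
    (subcategoryAcyclic AddCommGrpCat).ext_of_isTriangulatedClosed₂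
      ((Phi C).mapTriangle.obj T) ((Phi C).map_distinguished T hT) (h₁ C hC) (h₃ C hC))

lemma acyclicP_iff (C : A) {K L : CochainComplex A ℤ} (f₀ : K ⟶ L)
    {Z : HomotopyCategory A (ComplexShape.up ℤ)}
    (g : (HomotopyCategory.quotient A (ComplexShape.up ℤ)).obj L ⟶ Z)
    (h : Z ⟶ ((HomotopyCategory.quotient A (ComplexShape.up ℤ)).obj K)⟦(1:ℤ)⟧)
    (hT : Triangle.mk ((HomotopyCategory.quotient A (ComplexShape.up ℤ)).map f₀) g h ∈
      distTriang (HomotopyCategory A (ComplexShape.up ℤ))) :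
    subcategoryAcyclic AddCommGrpCat ((Phi C).obj Z) ↔ QuasiIso ((FF C).map f₀) := by
  have h1 := (subcategoryAcyclic AddCommGrpCat).trW_iff_of_distinguished _
    ((Phi C).map_distinguished _ hT)
  have h2 : (subcategoryAcyclic AddCommGrpCat).trW
      ((HomotopyCategory.quotient AddCommGrpCat (ComplexShape.up ℤ)).map ((FF C).map f₀)) ↔
      QuasiIso ((FF C).map f₀) := by
    rw [← quasiIso_eq_trW_subcategoryAcyclic, quotient_map_mem_quasiIso_iff,
      HomologicalComplex.mem_quasiIso_iff]
  exact h1.symm.trans h2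

lemma Wc_eq_W : Wc 𝒞 = (Sac 𝒞).trW := by
  ext X Y f
  constructor
  · rintro ⟨f₀, hf₀, rfl⟩
    obtain ⟨Z, g, h, hT⟩ := _root_.CategoryTheory.Pretriangulated.distinguished_cocone_triangle
      ((HomotopyCategory.quotient A (ComplexShape.up ℤ)).map f₀)
    exact ⟨Z, g, h, hT, fun C hC => (acyclicP_iff C f₀ g h hT).2 (hf₀ C hC)⟩
  · rintro ⟨Z, g, h, hT, mem⟩
    obtain ⟨f₀, hf₀⟩ := (HomotopyCategory.quotient A (ComplexShape.up ℤ)).map_surjective f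
    rw [← hf₀] at hT
    exact ⟨f₀, fun C hC => (acyclicP_iff C f₀ g h hT).1 (mem C hC), hf₀.symm⟩

variable {𝒞}

lemma hom_eq_zero (Cc : CochainComplex A ℤ) (hC : ∀ i, Cc.X i ∈ 𝒞) (n : ℤ)
    (hb : ∀ i : ℤ, n < i → IsZero (Cc.X i))
    {W : HomotopyCategory A (ComplexShape.up ℤ)} (hW : Sac 𝒞 W)
    (u : (HomotopyCategory.quotient A (ComplexShape.up ℤ)).obj Cc ⟶ W) : u = 0 := by
  obtain ⟨u₀, rfl⟩ := (HomotopyCategory.quotient A (ComplexShape.up ℤ)).map_surjective u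
  have hZ : ∀ i j : ℤ, ((FF (Cc.X i)).obj W.as).ExactAt j := fun i j =>
    (quotient_obj_mem_subcategoryAcyclic_iff_exactAt ((FF (Cc.X i)).obj W.as)).1
      (hW (Cc.X i) (hC i)) j
  rw [HomotopyCategory.eq_of_homotopy u₀ 0 (homotopyToZero Cc W.as u₀ n hb hZ),
    Functor.map_zero]
  rfl

lemma bij_postcomp (Cc : CochainComplex A ℤ) (hC : ∀ i, Cc.X i ∈ 𝒞) (n : ℤ)
    (hb : ∀ i : ℤ, n < i → IsZero (Cc.X i))
    {P Y : HomotopyCategory A (ComplexShape.up ℤ)} (s : P ⟶ Y) (hs : (Sac 𝒞).trW s) :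
    Function.Bijective (fun g : ((HomotopyCategory.quotient A (ComplexShape.up ℤ)).obj Cc ⟶ P) =>
      g ≫ s) := by
  obtain ⟨Z, g, h, hT, mem⟩ := hs
  constructor
  · intro g₁ g₂ hgg
    dsimp only at hgg
    have hsub : (g₁ - g₂) ≫ s = 0 := by
      rw [Preadditive.sub_comp, hgg, sub_self]
    obtain ⟨e, he⟩ := Pretriangulated.Triangle.coyoneda_exact₂ _
      (inv_rot_of_distTriang _ hT) (g₁ - g₂) hsub
    rw [hom_eq_zero Cc hC n hb ((Sac 𝒞).le_shift (-1) Z mem) e] at he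
    rw [← sub_eq_zero]
    exact he.trans zero_comp
  · intro f
    obtain ⟨e, he⟩ := Pretriangulated.Triangle.coyoneda_exact₂ _ hT f
      (hom_eq_zero Cc hC n hb mem (f ≫ g))
    exact ⟨e, he.symm⟩

end Stmt8Aux

/-- for a bounded-above complex `C•` with terms in `𝒞` and any complex `X•`,
the canonical map `Hom_{K(𝒜)}(C•, X•) → Hom_{D_𝒞(𝒜)}(C•, X•)` is bijective. -/
theorem stmt8 (𝒞 : Set A) (Cc X : CochainComplex A ℤ)
    (hC : ∀ i, Cc.X i ∈ 𝒞) (hbdd : BoundedAbove Cc) :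
    Function.Bijective
      (fun f : ((HomotopyCategory.quotient A (ComplexShape.up ℤ)).obj Cc ⟶
          (HomotopyCategory.quotient A (ComplexShape.up ℤ)).obj X) =>
        (Wc 𝒞).Q.map f) := by
  obtain ⟨n, hb⟩ := hbdd
  rw [Stmt8Aux.Wc_eq_W 𝒞]
  set W := (Stmt8Aux.Sac 𝒞).trW with hW
  set L := W.Q with hL
  constructor
  · intro f₁ f₂ hf
    dsimp only at hf
    obtain ⟨Z, s, hs, fac⟩ := (MorphismProperty.map_eq_iff_postcomp L W f₁ f₂).1 hf
    exact (Stmt8Aux.bij_postcomp Cc hC n hb s hs).1 fac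
  · intro F
    obtain ⟨φ, hφ⟩ := Localization.exists_leftFraction L W F
    obtain ⟨g, hg⟩ := (Stmt8Aux.bij_postcomp Cc hC n hb φ.s φ.hs).2 φ.f
    dsimp only at hg
    refine ⟨g, ?_⟩
    dsimp only
    have hiso : IsIso (L.map φ.s) := Localization.inverts L W _ φ.hs
    rw [hφ]
    rw [← cancel_mono (L.map φ.s), MorphismProperty.LeftFraction.map_comp_map_s,
      ← L.map_comp, hg]
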